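/- The shortest word q_0 in P_q is primitive, i.e., q_0 is not a proper power u^n with n > 1 of any word u. -/
import Mathlib


/-- `u ^ n` for lists: concatenation of `n` copies of `u`. -/
def listPow {X : Type*} (u : List X) : ℕ → List X
  | 0 => []
  | n+1 => u ++ listPow u n

/-- `P_q = { v : e ⊏ v ⊑ q ⊏ v·q }`. -/
def Pq {X : Type*} (q : List X) : Set (List X) :=
  {v | v ≠ [] ∧ v <+: q ∧ q <+: v ++ q}

/-- membership in the submonoid `P^*` generated by `P`. -/
def InStar {X : Type*} (P : Set (List X)) (w : List X) : Prop :=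
  ∃ l : List (List X), (∀ v ∈ l, v ∈ P) ∧ w = l.flatten

/-- A finite word `w` is quasiperiodic with quasiperiod `q`. -/
def QuasiPeriodic {X : Type*} (q w : List X) : Prop :=
  ∀ j < w.length, ∃ u : List X, u.length ≤ j ∧ j < u.length + q.length ∧ (u ++ q) <+: w

/-- `Q_q`: the set of finite words quasiperiodic with quasiperiod `q`. -/
def Qq {X : Type*} (q : List X) : Set (List X) := {w | QuasiPeriodic q w}

/-- `u` is a (finite) prefix of the infinite word `ξ`. -/
def InfPrefix {X : Type*} (ξ : ℕ → X) (u : List X) : Prop :=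
  u = (List.range u.length).map ξ

/-- An infinite word `ξ` is quasiperiodic with quasiperiod `q`. -/
def QuasiPeriodicInf {X : Type*} (q : List X) (ξ : ℕ → X) : Prop :=
  ∀ j : ℕ, ∃ u : List X, u.length ≤ j ∧ j < u.length + q.length ∧ InfPrefix ξ (u ++ q)

/-- the star root `P \ (P²·P*)`. -/
def StarRoot {X : Type*} (P : Set (List X)) : Set (List X) :=
  {v | v ∈ P ∧ ¬ ∃ (a b : List X) (l : List (List X)),
    a ∈ P ∧ b ∈ P ∧ (∀ x ∈ l, x ∈ P) ∧ v = a ++ b ++ l.flatten}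

/-- `ξ ∈ P^ω`: infinite concatenation of nonempty words of `P`. -/
def InOmega {X : Type*} (P : Set (List X)) (ξ : ℕ → X) : Prop :=
  ∃ f : ℕ → List X, (∀ i, f i ∈ P ∧ f i ≠ []) ∧
    ∀ n, InfPrefix ξ ((List.range n).map f).flatten

lemma listPow_length' {X : Type*} (u : List X) : ∀ n, (listPow u n).length = n * u.length
  | 0 => by simp [listPow]
  | n+1 => by simp [listPow, listPow_length' u n, Nat.succ_mul, Nat.add_comm]

lemma listPow_period' {X : Type*} (u : List X) :
    ∀ (m j : ℕ), j + u.length < m * u.length →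
      (listPow u m)[j + u.length]? = (listPow u m)[j]? := by
  intro m
  induction m with
  | zero => intro j h; omega
  | succ m ih =>
    intro j h
    have hmul : (m + 1) * u.length = m * u.length + u.length := Nat.succ_mul ..
    show (u ++ listPow u m)[j + u.length]? = (u ++ listPow u m)[j]?
    rw [List.getElem?_append_right (by omega), Nat.add_sub_cancel]
    rcases lt_or_ge j u.length with hj | hj
    · have hm : m ≠ 0 := by rintro rfl; omega
      obtain ⟨m', rfl⟩ := Nat.exists_eq_succ_of_ne_zero hm
      rw [List.getElem?_append_left hj]
      show (u ++ listPow u m')[j]? = u[j]?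
      rw [List.getElem?_append_left hj]
    · rw [List.getElem?_append_right hj]
      have := ih (j - u.length) (by omega)
      rwa [Nat.sub_add_cancel hj] at this

lemma pref_getElem?' {X : Type*} {a b : List X} (h : a <+: b) {i : ℕ} (hi : i < a.length) :
    b[i]? = a[i]? := by
  rw [List.getElem?_eq_getElem hi, List.getElem?_eq_getElem (lt_of_lt_of_le hi h.length_le),
    h.getElem hi]

lemma period_of_prefix' {X : Type*} {q v : List X} (h : q <+: v ++ q) :
    ∀ i, i + v.length < q.length → q[i + v.length]? = q[i]? := by
  intro i hi
  rw [← pref_getElem?' h hi, List.getElem?_append_right (by omega), Nat.add_sub_cancel]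

lemma prefix_of_period' {X : Type*} {q u : List X} (hpre : u <+: q)
    (hper : ∀ i, i + u.length < q.length → q[i + u.length]? = q[i]?) :
    q <+: u ++ q := by
  rw [List.prefix_iff_eq_take]
  apply List.ext_getElem?
  intro n
  rw [List.getElem?_take]
  split
  · rename_i hn
    rcases lt_or_ge n u.length with h1 | h1
    · rw [List.getElem?_append_left h1, ← pref_getElem?' hpre h1]
    · rw [List.getElem?_append_right h1]
      have := hper (n - u.length) (by omega)
      rw [Nat.sub_add_cancel h1] at this
      exact this
  · rename_i hn
    exact List.getElem?_eq_none (by omega)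

/-- The shortest word `q₀` of `P_q` is primitive. -/
theorem stmt8 {X : Type*} (q : List X) (hq : q ≠ []) (q0 : List X)
    (h0 : q0 ∈ Pq q) (hmin : ∀ v ∈ Pq q, q0.length ≤ v.length) :
    ¬ ∃ (u : List X) (n : ℕ), 1 < n ∧ q0 = listPow u n := by
  rintro ⟨u, n, hn, hpow⟩
  obtain ⟨hne, hpre, hper⟩ := h0
  subst hpow
  have hul : 0 < u.length := by
    by_contra h
    have hz : u.length = 0 := by omega
    have : (listPow u n).length = 0 := by rw [listPow_length', hz, Nat.mul_zero]
    exact hne (List.eq_nil_of_length_eq_zero this)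
  have hm : n ≠ 0 := by omega
  have hupre : u <+: q := by
    refine List.IsPrefix.trans ?_ hpre
    obtain ⟨m', rfl⟩ := Nat.exists_eq_succ_of_ne_zero hm
    exact ⟨listPow u m', rfl⟩
  have hbig : ∀ i, i + n * u.length < q.length → q[i + n * u.length]? = q[i]? := by
    intro i hi
    have := period_of_prefix' hper i (by rwa [listPow_length'])
    rwa [listPow_length'] at this
  have hnle : n * u.length ≤ q.length := by
    have := hpre.length_le
    rwa [listPow_length'] at this
  have hsub : (n - 1) * u.length = n * u.length - u.length := Nat.sub_one_mul ..
  have hge : u.length ≤ n * u.length := Nat.le_mul_of_pos_left _ (by omega)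
  have hsmall : ∀ i, i + u.length < q.length → q[i + u.length]? = q[i]? := by
    intro i
    induction i using Nat.strong_induction_on with
    | _ i IH =>
      intro hi
      rcases lt_or_ge (i + u.length) (n * u.length) with hcase | hcase
      · rw [pref_getElem?' hpre (by rw [listPow_length']; exact hcase),
          pref_getElem?' hpre (by rw [listPow_length']; omega),
          listPow_period' u n i hcase]
      · set i' := i + u.length - n * u.length with hi'
        have e1 : i' + n * u.length = i + u.length := by omega
        have step1 : q[i + u.length]? = q[i']? := by
          rw [← e1]; exact hbig i' (by omega)
        rw [step1]
        have chain : ∀ m, i' + m * u.length ≤ i → q[i' + m * u.length]? = q[i']? := by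
          intro m
          induction m with
          | zero => simp
          | succ m ihm =>
            intro hle
            have hmul : (m + 1) * u.length = m * u.length + u.length := Nat.succ_mul ..
            have he : i' + (m + 1) * u.length = (i' + m * u.length) + u.length := by omega
            rw [he, IH (i' + m * u.length) (by omega) (by omega), ihm (by omega)]
        have := chain (n - 1) (by omega)
        rw [show i' + (n - 1) * u.length = i from by omega] at this
        exact this.symm
  have hu_mem : u ∈ Pq q :=
    ⟨by intro h; subst h; simp at hul, hupre, prefix_of_period' hupre hsmall⟩
  have := hmin u hu_mem
  rw [listPow_length'] at this
  have h2 : 2 * u.length ≤ n * u.length := Nat.mul_le_mul_right _ (by omega)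
  omega
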